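/- Let S be an affine semigroup and T an I(S)-semigroup. Then imsg_S(T \ {0}) is finite; in fact imsg_S(T \ {0}) equals the set of minimal elements, with respect to ≤_S, of the minimal generating set of T. -/

import Mathlib

open Pointwise

/-- `S` is an affine semigroup: a finitely generated additive submonoid of `ℕ^p`
(containing `0`). -/
def IsAffine {p : ℕ} (S : Set (Fin p → ℕ)) : Prop :=
  ∃ F : Finset (Fin p → ℕ),
    S = (AddSubmonoid.closure (F : Set (Fin p → ℕ)) : Set (Fin p → ℕ))

/-- The set of integer points of the rational cone generated by `S`:
`x` is a non-negative rational combination of elements of `S` iff some positive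
multiple of `x` lies in the additive monoid generated by `S`. -/
def coneOf {p : ℕ} (S : Set (Fin p → ℕ)) : Set (Fin p → ℕ) :=
  {x | ∃ n : ℕ, 0 < n ∧ n • x ∈ AddSubmonoid.closure S}

/-- A `𝒞`-semigroup: an affine semigroup with finite complement in its cone. -/
def CSemigroup {p : ℕ} (S : Set (Fin p → ℕ)) : Prop :=
  IsAffine S ∧ (coneOf S \ S).Finite

/-- `P` is an ideal of `S`: `P ⊆ S` and `P + S ⊆ P`. -/
def IsIdealOf {p : ℕ} (S P : Set (Fin p → ℕ)) : Prop :=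
  P ⊆ S ∧ P + S ⊆ P

/-- `x ≤_S y` iff `y - x ∈ S`. -/
def leS {p : ℕ} (S : Set (Fin p → ℕ)) (x y : Fin p → ℕ) : Prop :=
  ∃ s ∈ S, x + s = y

/-- A non-empty subset `X ⊆ S` is `S`-incomparable if `x - x' ∉ S` for all
distinct `x, x' ∈ X`. -/
def SIncomparable {p : ℕ} (S X : Set (Fin p → ℕ)) : Prop :=
  X.Nonempty ∧ X ⊆ S ∧ ∀ x ∈ X, ∀ x' ∈ X, x ≠ x' → ¬ leS S x' x

/-- The minimal generating set of `T`: non-zero elements of `T` that are not a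
sum of two non-zero elements of `T`. -/
def msg {p : ℕ} (T : Set (Fin p → ℕ)) : Set (Fin p → ℕ) :=
  {x ∈ T | x ≠ 0 ∧ ¬ ∃ a ∈ T, ∃ b ∈ T, a ≠ 0 ∧ b ≠ 0 ∧ x = a + b}

/-- The Apery set `Ap(S, m) = {s ∈ S : s - m ∉ S}`. -/
def Ap {p : ℕ} (S : Set (Fin p → ℕ)) (m : Fin p → ℕ) : Set (Fin p → ℕ) :=
  {s ∈ S | ¬ ∃ u ∈ S, m + u = s}

/-- `τ` is an extremal ray of the cone `C`: the set of points of `C` lying on the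
ray spanned by some non-zero `v ∈ C`, such that whenever a sum of two elements of
`C` lies in `τ`, both summands lie in `τ`. -/
def IsExtremalRay {p : ℕ} (C τ : Set (Fin p → ℕ)) : Prop :=
  (∃ v : Fin p → ℕ, v ≠ 0 ∧ v ∈ C ∧
    τ = {x ∈ C | ∃ a b : ℕ, 0 < b ∧ b • x = a • v}) ∧
  ∀ x ∈ C, ∀ y ∈ C, x + y ∈ τ → x ∈ τ ∧ y ∈ τ

/-- `τ 1, …, τ t` are (exactly) the extremal rays of the cone `C`. -/
def RaysOf {p t : ℕ} (C : Set (Fin p → ℕ)) (τ : Fin t → Set (Fin p → ℕ)) : Prop :=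
  (∀ i, IsExtremalRay C (τ i)) ∧ Function.Injective τ ∧
    ∀ ρ, IsExtremalRay C ρ → ∃ i, ρ = τ i

/-- `m` is the `i`-multiplicity of `T` along the ray `τ`: the minimum non-zero
element of `τ ∩ T` for the componentwise order. -/
def MultOn {p : ℕ} (τ T : Set (Fin p → ℕ)) (m : Fin p → ℕ) : Prop :=
  m ∈ τ ∧ m ∈ T ∧ m ≠ 0 ∧ ∀ x ∈ τ ∩ T, x ≠ 0 → m ≤ x

/-- `T` is an `I(S)`-semigroup: an affine semigroup such that `T \ {0}` is an
ideal of `S`. -/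
def ISemigroupOf {p : ℕ} (S T : Set (Fin p → ℕ)) : Prop :=
  IsAffine T ∧ 0 ∈ T ∧ IsIdealOf S (T \ {0})

/-- `le` is a monomial order on `ℕ^p`: a total order compatible with addition in
which `0` is the least element. -/
def IsMonomialOrder {p : ℕ} (le : (Fin p → ℕ) → (Fin p → ℕ) → Prop) : Prop :=
  (∀ x, le x x) ∧ (∀ x y z, le x y → le y z → le x z) ∧
  (∀ x y, le x y → le y x → x = y) ∧ (∀ x y, le x y ∨ le y x) ∧
  (∀ x y z, le x y → le (x + z) (y + z)) ∧ (∀ x, le 0 x)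

/-- The pseudo-Frobenius elements of `T`. -/
def PF {p : ℕ} (T : Set (Fin p → ℕ)) : Set (Fin p → ℕ) :=
  {x ∈ coneOf T \ T | ∀ y ∈ T, y ≠ 0 → x + y ∈ T}


-- Auxiliary: decomposition in a closure
lemma decomp_closure {p : ℕ} (F : Set (Fin p → ℕ)) {x : Fin p → ℕ}
    (hx : x ∈ AddSubmonoid.closure F) (hx0 : x ≠ 0) :
    x ∈ F ∨ ∃ a ∈ AddSubmonoid.closure F, ∃ b ∈ AddSubmonoid.closure F,
      a ≠ 0 ∧ b ≠ 0 ∧ x = a + b := by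
  induction hx using AddSubmonoid.closure_induction with
  | mem y hy => exact Or.inl hy
  | zero => exact absurd rfl hx0
  | add a b ha hb iha ihb =>
    by_cases ha0 : a = 0
    · subst ha0; simpa using ihb (by simpa using hx0)
    · by_cases hb0 : b = 0
      · subst hb0; simpa using iha (by simpa using hx0)
      · exact Or.inr ⟨a, ha, b, hb, ha0, hb0, rfl⟩

-- Auxiliary: msg of an affine semigroup is contained in any finite generating set
lemma msg_subset_gen {p : ℕ} {T : Set (Fin p → ℕ)} {F : Finset (Fin p → ℕ)}
    (hF : T = (AddSubmonoid.closure (F : Set (Fin p → ℕ)) : Set (Fin p → ℕ))) :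
    msg T ⊆ (F : Set (Fin p → ℕ)) := by
  rintro x ⟨hxT, hx0, hns⟩
  have hx : x ∈ AddSubmonoid.closure (F : Set (Fin p → ℕ)) := by rw [hF] at hxT; exact hxT
  rcases decomp_closure _ hx hx0 with h | ⟨a, ha, b, hb, ha0, hb0, hab⟩
  · exact h
  · exact absurd ⟨a, by rw [hF]; exact ha, b, by rw [hF]; exact hb, ha0, hb0, hab⟩ hns

-- Auxiliary: every nonzero element of an affine semigroup is `msg` plus remainder
lemma exists_msg_add {p : ℕ} {T : Set (Fin p → ℕ)} (hT : IsAffine T) :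
    ∀ x ∈ T, x ≠ 0 → ∃ z ∈ msg T, ∃ r ∈ T, x = z + r := by
  obtain ⟨F, hF⟩ := hT
  have h0 : (0 : Fin p → ℕ) ∈ T := by rw [hF]; exact (AddSubmonoid.closure _).zero_mem
  have hadd : ∀ a ∈ T, ∀ b ∈ T, a + b ∈ T := by
    intro a ha b hb
    rw [hF] at ha hb ⊢
    exact add_mem ha hb
  suffices H : ∀ n : ℕ, ∀ x ∈ T, x ≠ 0 → (∑ i, x i) ≤ n →
      ∃ z ∈ msg T, ∃ r ∈ T, x = z + r by
    intro x hx hx0; exact H _ x hx hx0 le_rfl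
  intro n
  induction n with
  | zero =>
    intro x hx hx0 hle
    exfalso; apply hx0
    funext i
    have := Finset.sum_eq_zero_iff.mp (Nat.le_zero.mp hle) i (Finset.mem_univ i)
    simpa using this
  | succ n ih =>
    intro x hx hx0 hle
    by_cases hm : x ∈ msg T
    · exact ⟨x, hm, 0, h0, (add_zero x).symm⟩
    · have hdec : ∃ a ∈ T, ∃ b ∈ T, a ≠ 0 ∧ b ≠ 0 ∧ x = a + b := by
        by_contra hns; exact hm ⟨hx, hx0, hns⟩
      obtain ⟨a, ha, b, hb, ha0, hb0, hab⟩ := hdec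
      have hbpos : 0 < ∑ i, b i := by
        by_contra hc
        push_neg at hc
        refine hb0 (funext fun i => ?_)
        have := Finset.sum_eq_zero_iff.mp (Nat.le_zero.mp hc) i (Finset.mem_univ i)
        simpa using this
      have hsum : ∑ i, x i = (∑ i, a i) + ∑ i, b i := by
        rw [hab]; exact Finset.sum_add_distrib
      have han : (∑ i, a i) ≤ n := by omega
      obtain ⟨z, hz, r, hr, hzr⟩ := ih a ha ha0 han
      exact ⟨z, hz, r + b, hadd r hr b hb, by rw [hab, hzr, add_assoc]⟩

/-- For an `I(S)`-semigroup `T`, the set `imsg_S(T \ {0})` of `≤_S`-minimal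
elements of `T \ {0}` is finite and equals the set of `≤_S`-minimal elements of
the minimal generating set of `T`. -/
theorem statement9 {p : ℕ} (S T : Set (Fin p → ℕ)) (hS : IsAffine S)
    (hT : ISemigroupOf S T) :
    {x ∈ T \ {0} | ∀ y ∈ T \ {0}, leS S y x → y = x}.Finite ∧
    {x ∈ T \ {0} | ∀ y ∈ T \ {0}, leS S y x → y = x}
      = {x ∈ msg T | ∀ y ∈ msg T, leS S y x → y = x} := by
  obtain ⟨hTaff, hT0, hTsubS, hTideal⟩ := hT
  obtain ⟨G, hG⟩ := hS
  have hSadd : ∀ a ∈ S, ∀ b ∈ S, a + b ∈ S := by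
    intro a ha b hb
    rw [hG] at ha hb ⊢
    exact add_mem ha hb
  -- msg T ⊆ T \ {0}
  have hmsg_sub : msg T ⊆ T \ {0} := by
    rintro y ⟨hyT, hy0, -⟩
    exact ⟨hyT, hy0⟩
  have key : {x ∈ T \ {0} | ∀ y ∈ T \ {0}, leS S y x → y = x}
      = {x ∈ msg T | ∀ y ∈ msg T, leS S y x → y = x} := by
    ext x
    constructor
    · rintro ⟨hxT, hmin⟩
      have hxmsg : x ∈ msg T := by
        refine ⟨hxT.1, hxT.2, ?_⟩
        rintro ⟨a, ha, b, hb, ha0, hb0, hab⟩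
        have hbS : b ∈ S := hTsubS ⟨hb, hb0⟩
        have : a = x := hmin a ⟨ha, ha0⟩ ⟨b, hbS, hab.symm⟩
        subst this
        exact hb0 (by simpa using hab)
      exact ⟨hxmsg, fun y hy hle => hmin y (hmsg_sub hy) hle⟩
    · rintro ⟨hxmsg, hmin⟩
      refine ⟨hmsg_sub hxmsg, ?_⟩
      rintro y ⟨hyT, hy0⟩ ⟨s, hsS, hys⟩
      obtain ⟨z, hz, r, hr, hzr⟩ := exists_msg_add hTaff y hyT hy0
      have hrs : r + s ∈ S := by
        by_cases hr0 : r = 0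
        · subst hr0; simpa using hsS
        · exact hSadd r (hTsubS ⟨hr, hr0⟩) s hsS
      have hzx : z = x := hmin z hz ⟨r + s, hrs, by rw [← hys, hzr]; ring⟩
      have hx : x + (r + s) = x := by
        conv_rhs => rw [← hys, hzr, hzx]
        ring
      have hrs0 : r + s = 0 := by
        have := congrFun hx
        funext i
        have h := this i
        simp only [Pi.add_apply, Pi.zero_apply] at h ⊢
        omega
      have hs0 : s = 0 := by
        funext i
        have := congrFun hrs0 i
        simp only [Pi.add_apply, Pi.zero_apply] at this ⊢
        omega
      rw [← hys, hs0, add_zero]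
  refine ⟨?_, key⟩
  rw [key]
  obtain ⟨F, hF⟩ := hTaff
  exact Set.Finite.subset F.finite_toSet
    (fun x hx => msg_subset_gen hF hx.1)
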